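/- arXiv:2401.04822 — 2 statements merged into one kernel-verified Lean document; each statement's English description precedes it below -/
import Mathlib

section
/- For every real α ≥ 0, if 0 ≤ 12(1 + α³ − (1+α³)^{5/3}) + 5α³ + 2α⁵ then α = 0. -/
theorem alpha_vanishes (α : ℝ) (hα : 0 ≤ α)
    (h : 0 ≤ 12 * (1 + α ^ 3 - (1 + α ^ 3) ^ ((5 : ℝ) / 3)) + 5 * α ^ 3 + 2 * α ^ 5) :
    α = 0 := by
  by_contra hne
  have hpos : 0 < α := lt_of_le_of_ne hα (Ne.symm hne)
  have htpos : 0 < α ^ 3 := by positivity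
  have hb : 1 + (5 / 3 : ℝ) * α ^ 3 < (1 + α ^ 3) ^ ((5 : ℝ) / 3) :=
    one_add_mul_self_lt_rpow_one_add (by linarith) (by positivity) (by norm_num)
  rcases le_or_gt (α ^ 2) (3 / 2) with hc | hc
  · have h5 : α ^ 5 ≤ 3 / 2 * α ^ 3 := by nlinarith [mul_le_mul_of_nonneg_right hc htpos.le]
    linarith
  · -- show (1+t)^{5/3} ≥ α^5 + (5/3) α^2
    have hb2 : 1 + (5 / 3 : ℝ) * (α ^ 3)⁻¹ ≤ (1 + (α ^ 3)⁻¹) ^ ((5 : ℝ) / 3) :=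
      one_add_mul_self_le_rpow_one_add (le_trans (by norm_num : (-1:ℝ) ≤ 0) (by positivity)) (by norm_num)
    have hsplit : (1 + α ^ 3) ^ ((5 : ℝ) / 3)
        = (α ^ 3) ^ ((5 : ℝ) / 3) * (1 + (α ^ 3)⁻¹) ^ ((5 : ℝ) / 3) := by
      rw [← Real.mul_rpow htpos.le (by positivity)]
      congr 1
      field_simp
      ring
    have hpow : (α ^ 3 : ℝ) ^ ((5 : ℝ) / 3) = α ^ 5 := by
      rw [← Real.rpow_natCast α 3, ← Real.rpow_mul hα, ← Real.rpow_natCast α 5]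
      norm_num
    have key : α ^ 5 + (5 / 3) * α ^ 2 ≤ (1 + α ^ 3) ^ ((5 : ℝ) / 3) := by
      rw [hsplit, hpow]
      have h5 : (0:ℝ) ≤ α ^ 5 := by positivity
      calc α ^ 5 + (5 / 3) * α ^ 2 = α ^ 5 * (1 + (5 / 3 : ℝ) * (α ^ 3)⁻¹) := by
            field_simp
        _ ≤ α ^ 5 * (1 + (α ^ 3)⁻¹) ^ ((5 : ℝ) / 3) :=
            mul_le_mul_of_nonneg_left hb2 h5
    nlinarith [key, hc, htpos, mul_le_mul_of_nonneg_right hc.le (by positivity : (0:ℝ) ≤ α ^ 3), sq_nonneg (α - 3/2), sq_nonneg α]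
end

section
/- For R > 0 with (4/3)πR³ ≤ 1, define f_R(x) = −(3/(4π))R^{-3}x² + (5R^{-1} + (4/3)πR²)x − 4π^{1/2}x^{1/2} − (64π³/3)R⁶ x^{-1} for x > 0. Then f_R(4πR²) = 0, f_R'(4πR²) ≤ 0, and f_R''(x) < 0 for all x ≥ 4πR². Consequently, if x ≥ 4πR² and f_R(x) ≥ 0 then x = 4πR². -/
open Real

set_option maxHeartbeats 1000000 in
theorem fR_concavity_roundness (R : ℝ) (hR : 0 < R) (hV : 4 / 3 * π * R ^ 3 ≤ 1) :
    let f : ℝ → ℝ := fun x =>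
      -(3 / (4 * π)) * R⁻¹ ^ 3 * x ^ 2 + (5 * R⁻¹ + 4 / 3 * π * R ^ 2) * x
        - 4 * Real.sqrt π * Real.sqrt x - 64 * π ^ 3 / 3 * R ^ 6 * x⁻¹
    f (4 * π * R ^ 2) = 0 ∧
    deriv f (4 * π * R ^ 2) ≤ 0 ∧
    (∀ x, 4 * π * R ^ 2 ≤ x → deriv (deriv f) x < 0) ∧
    (∀ x, 4 * π * R ^ 2 ≤ x → 0 ≤ f x → x = 4 * π * R ^ 2) := by
  intro f
  have hπ : (0:ℝ) < π := Real.pi_pos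
  have hx₀ : (0:ℝ) < 4 * π * R ^ 2 := by positivity
  have hsπ : Real.sqrt π * Real.sqrt π = π := Real.mul_self_sqrt hπ.le
  have hsπ0 : Real.sqrt π ≠ 0 := by positivity
  have hsx₀ : Real.sqrt (4 * π * R ^ 2) = 2 * Real.sqrt π * R := by
    rw [show 4 * π * R ^ 2 = (2 * Real.sqrt π * R) ^ 2 by
      rw [mul_pow, mul_pow, Real.sq_sqrt hπ.le]; ring]
    exact Real.sqrt_sq (by positivity)
  set g : ℝ → ℝ := fun y =>
    -(3 / (4 * π)) * R⁻¹ ^ 3 * (2 * y) + (5 * R⁻¹ + 4 / 3 * π * R ^ 2)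
      - 4 * Real.sqrt π * (2 * Real.sqrt y)⁻¹ - 64 * π ^ 3 / 3 * R ^ 6 * (-(y ^ 2)⁻¹)
    with hg
  have hder : ∀ x : ℝ, 0 < x → HasDerivAt f (g x) x := by
    intro x hx
    have h1 : HasDerivAt (fun y : ℝ => -(3 / (4 * π)) * R⁻¹ ^ 3 * y ^ 2)
        (-(3 / (4 * π)) * R⁻¹ ^ 3 * (2 * x)) x := by
      exact ((hasDerivAt_pow 2 x).const_mul (-(3 / (4 * π)) * R⁻¹ ^ 3)).congr_deriv (by
        push_cast; ring)
    have h2 : HasDerivAt (fun y : ℝ => (5 * R⁻¹ + 4 / 3 * π * R ^ 2) * y)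
        (5 * R⁻¹ + 4 / 3 * π * R ^ 2) x := by
      exact ((hasDerivAt_id x).const_mul (5 * R⁻¹ + 4 / 3 * π * R ^ 2)).congr_deriv (by ring)
    have h3 : HasDerivAt (fun y : ℝ => 4 * Real.sqrt π * Real.sqrt y)
        (4 * Real.sqrt π * (2 * Real.sqrt x)⁻¹) x := by
      exact ((Real.hasDerivAt_sqrt hx.ne').const_mul (4 * Real.sqrt π)).congr_deriv (by rw [one_div])
    have h4 : HasDerivAt (fun y : ℝ => 64 * π ^ 3 / 3 * R ^ 6 * y⁻¹)
        (64 * π ^ 3 / 3 * R ^ 6 * (-(x ^ 2)⁻¹)) x :=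
      (hasDerivAt_inv hx.ne').const_mul _
    exact ((h1.add h2).sub h3).sub h4
  have hdf : ∀ x : ℝ, 0 < x → deriv f x = g x := fun x hx => (hder x hx).deriv
  -- value at x₀
  have hfx₀ : f (4 * π * R ^ 2) = 0 := by
    show -(3 / (4 * π)) * R⁻¹ ^ 3 * (4 * π * R ^ 2) ^ 2
        + (5 * R⁻¹ + 4 / 3 * π * R ^ 2) * (4 * π * R ^ 2)
        - 4 * Real.sqrt π * Real.sqrt (4 * π * R ^ 2)
        - 64 * π ^ 3 / 3 * R ^ 6 * (4 * π * R ^ 2)⁻¹ = 0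
    rw [hsx₀]
    field_simp
    ring_nf
    rw [Real.sq_sqrt hπ.le]
    ring
  -- g value at x₀
  have hgx₀ : g (4 * π * R ^ 2) = -2 / R + 8 / 3 * π * R ^ 2 := by
    rw [hg]
    simp only
    rw [hsx₀]
    field_simp
    ring_nf
  have hderiv₀ : deriv f (4 * π * R ^ 2) ≤ 0 := by
    rw [hdf _ hx₀, hgx₀]
    have h2 : 8 / 3 * π * R ^ 2 ≤ 2 / R := by
      rw [le_div_iff₀ hR]; nlinarith [hV]
    have h3 : -2 / R = -(2 / R) := by ring
    linarith
  -- second derivative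
  have hsecond : ∀ x, 4 * π * R ^ 2 ≤ x → deriv (deriv f) x < 0 := by
    intro x hxx
    have hx : 0 < x := hx₀.trans_le hxx
    have hs : (0:ℝ) < Real.sqrt x := Real.sqrt_pos.mpr hx
    have hss : Real.sqrt x * Real.sqrt x = x := Real.mul_self_sqrt hx.le
    have hev : deriv f =ᶠ[nhds x] g := by
      filter_upwards [eventually_gt_nhds hx] with y hy using hdf y hy
    rw [hev.deriv_eq]
    have hG1 : HasDerivAt (fun y : ℝ => -(3 / (4 * π)) * R⁻¹ ^ 3 * (2 * y))
        (-(3 / (4 * π)) * R⁻¹ ^ 3 * 2) x := by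
      exact (((hasDerivAt_id x).const_mul (2:ℝ)).const_mul (-(3 / (4 * π)) * R⁻¹ ^ 3)).congr_deriv (by
        ring)
    have hG2 : HasDerivAt (fun _ : ℝ => (5 * R⁻¹ + 4 / 3 * π * R ^ 2)) 0 x := hasDerivAt_const _ _
    have hG3 : HasDerivAt (fun y : ℝ => 4 * Real.sqrt π * (2 * Real.sqrt y)⁻¹)
        (4 * Real.sqrt π * (-(2 * (1 / (2 * Real.sqrt x))) / (2 * Real.sqrt x) ^ 2)) x :=
      (((Real.hasDerivAt_sqrt hx.ne').const_mul 2).inv (by positivity)).const_mul _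
    have hG4 : HasDerivAt (fun y : ℝ => 64 * π ^ 3 / 3 * R ^ 6 * (-(y ^ 2)⁻¹))
        (64 * π ^ 3 / 3 * R ^ 6 * (-(-((2:ℕ) * x ^ 1) / (x ^ 2) ^ 2))) x :=
      (((hasDerivAt_pow 2 x).inv (pow_ne_zero 2 hx.ne')).neg).const_mul _
    have hG := (((hG1.add hG2).sub hG3).sub hG4).deriv
    rw [show deriv g x = _ from hG]
    have heq : -(3 / (4 * π)) * R⁻¹ ^ 3 * 2 + 0
        - 4 * Real.sqrt π * (-(2 * (1 / (2 * Real.sqrt x))) / (2 * Real.sqrt x) ^ 2)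
        - 64 * π ^ 3 / 3 * R ^ 6 * (-(-((2:ℕ) * x ^ 1) / (x ^ 2) ^ 2))
        = -(3 / (2 * π)) * (R ^ 3)⁻¹ + Real.sqrt π / (x * Real.sqrt x)
          - 128 * π ^ 3 / 3 * R ^ 6 / x ^ 3 := by
      have hR0 : R ≠ 0 := hR.ne'
      have hπ0 : π ≠ 0 := hπ.ne'
      push_cast
      set s := Real.sqrt x with hsdef
      have hs0 : s ≠ 0 := hs.ne'
      rw [← hss]
      field_simp
      ring
    rw [heq]
    have hsx : 2 * Real.sqrt π * R ≤ Real.sqrt x := by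
      rw [← hsx₀]; exact Real.sqrt_le_sqrt hxx
    have hx3 : Real.sqrt π * (8 * π * R ^ 3) ≤ x * Real.sqrt x := by
      calc Real.sqrt π * (8 * π * R ^ 3) = (4 * π * R ^ 2) * (2 * Real.sqrt π * R) := by ring
      _ ≤ x * Real.sqrt x := mul_le_mul hxx hsx (by positivity) hx.le
    have hB : Real.sqrt π / (x * Real.sqrt x) ≤ 1 / (8 * π * R ^ 3) := by
      rw [div_le_div_iff₀ (by positivity) (by positivity)]
      linarith
    have hC : (0:ℝ) < 128 * π ^ 3 / 3 * R ^ 6 / x ^ 3 := by positivity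
    have hA : 1 / (8 * π * R ^ 3) < 3 / (2 * π) * (R ^ 3)⁻¹ := by
      rw [show 3 / (2 * π) * (R ^ 3)⁻¹ = 3 / (2 * π * R ^ 3) by ring,
        div_lt_div_iff₀ (by positivity) (by positivity)]
      have hpr : (0:ℝ) < π * R ^ 3 := by positivity
      nlinarith [hpr]
    linarith
  refine ⟨hfx₀, hderiv₀, hsecond, ?_⟩
  intro x hx hfx
  by_contra hne
  have hlt : 4 * π * R ^ 2 < x := hx.lt_of_ne (Ne.symm hne)
  have hcf : ContinuousOn f (Set.Ici (4 * π * R ^ 2)) :=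
    fun y hy => ((hder y (hx₀.trans_le hy)).continuousAt).continuousWithinAt
  have hgc : ContinuousOn g (Set.Ici (4 * π * R ^ 2)) := by
    apply ContinuousOn.sub
    apply ContinuousOn.sub
    apply ContinuousOn.add
    · exact continuousOn_const.mul (continuousOn_const.mul continuousOn_id)
    · exact continuousOn_const
    · refine continuousOn_const.mul ((continuousOn_const.mul
        Real.continuous_sqrt.continuousOn).inv₀ fun y hy => ?_)
      have : 0 < y := hx₀.trans_le hy
      show (2:ℝ) * Real.sqrt y ≠ 0
      positivity
    · exact continuousOn_const.mul
        (((continuousOn_id.pow 2).inv₀ fun y hy => pow_ne_zero 2 (hx₀.trans_le hy).ne').neg)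
  have hdfc : ContinuousOn (deriv f) (Set.Ici (4 * π * R ^ 2)) :=
    hgc.congr fun y hy => hdf y (hx₀.trans_le hy)
  have hder_anti : StrictAntiOn (deriv f) (Set.Ici (4 * π * R ^ 2)) := by
    apply strictAntiOn_of_deriv_neg (convex_Ici _) hdfc
    intro y hy
    rw [interior_Ici] at hy
    exact hsecond y hy.le
  have hf_anti : StrictAntiOn f (Set.Ici (4 * π * R ^ 2)) := by
    apply strictAntiOn_of_deriv_neg (convex_Ici _) hcf
    intro y hy
    rw [interior_Ici] at hy
    have h1 : deriv f y < deriv f (4 * π * R ^ 2) :=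
      hder_anti Set.self_mem_Ici (Set.mem_Ici.mpr hy.le) hy
    linarith
  have : f x < f (4 * π * R ^ 2) :=
    hf_anti Set.self_mem_Ici (Set.mem_Ici.mpr hx) hlt
  rw [hfx₀] at this
  linarith
end
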